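/- arXiv:1107.1561 — 2 statements merged into one kernel-verified Lean document; each statement's English description precedes it below -/
import Mathlib

section
/- If Z₁ and Z₂ are two real n×n matrices that both minimize the nuclear norm ‖Z‖_* over all Z satisfying X = XZ, for a given real m×n matrix X, then Z₁ = Z₂. -/
open Matrix

section Aux

variable {k : Type*} [Fintype k] [DecidableEq k]

/-- Square root of a positive semidefinite real matrix via its spectral decomposition. -/
noncomputable def Matrix.PosSemidef.sqrt {A : Matrix k k ℝ} (hA : A.PosSemidef) : Matrix k k ℝ :=
  hA.1.eigenvectorUnitary.1 * diagonal (fun i => Real.sqrt (hA.1.eigenvalues i)) *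
    (star hA.1.eigenvectorUnitary : Matrix k k ℝ)

lemma Matrix.PosSemidef.posSemidef_sqrt {A : Matrix k k ℝ} (hA : A.PosSemidef) :
    hA.sqrt.PosSemidef := by
  have hD : (diagonal (fun i => Real.sqrt (hA.1.eigenvalues i))).PosSemidef :=
    posSemidef_diagonal_iff.mpr fun i => Real.sqrt_nonneg _
  simpa [Matrix.PosSemidef.sqrt, Matrix.star_eq_conjTranspose] using
    hD.mul_mul_conjTranspose_same hA.1.eigenvectorUnitary.1

lemma Matrix.PosSemidef.sq_sqrt {A : Matrix k k ℝ} (hA : A.PosSemidef) : hA.sqrt ^ 2 = A := by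
  conv_rhs => rw [hA.1.spectral_theorem]
  rw [sq, Matrix.PosSemidef.sqrt]
  have hU : (star hA.1.eigenvectorUnitary.1 : Matrix k k ℝ) * hA.1.eigenvectorUnitary.1 = 1 :=
    Unitary.coe_star_mul_self _
  have hDD : diagonal (fun i => Real.sqrt (hA.1.eigenvalues i)) *
      diagonal (fun i => Real.sqrt (hA.1.eigenvalues i)) =
      diagonal (RCLike.ofReal ∘ hA.1.eigenvalues) := by
    rw [diagonal_mul_diagonal]
    congr 1
    funext i
    simp [Real.mul_self_sqrt (hA.eigenvalues_nonneg i)]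
  simp only [Unitary.conjStarAlgAut_apply]
  rw [← hDD]
  simp only [Matrix.mul_assoc]
  rw [← Matrix.mul_assoc (star _) _ _, hU, Matrix.one_mul]

private lemma trace_sqrt' {A : Matrix k k ℝ} (hA : A.PosSemidef) :
    hA.sqrt.trace = ∑ i, Real.sqrt (hA.1.eigenvalues i) := by
  rw [Matrix.PosSemidef.sqrt, Matrix.trace_mul_cycle]
  rw [show (star hA.1.eigenvectorUnitary.1 : Matrix k k ℝ) * hA.1.eigenvectorUnitary.1 = 1 from
    Unitary.coe_star_mul_self _, one_mul, Matrix.trace_diagonal]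

private lemma psd_diag_nonneg' {A : Matrix k k ℝ} (hA : A.PosSemidef) (i : k) : 0 ≤ A i i := by
  have := hA.dotProduct_mulVec_nonneg (Pi.single i 1)
  simpa [dotProduct, Matrix.mulVec, Pi.single_apply] using this

private lemma psd_trace_zero' {A : Matrix k k ℝ} (hA : A.PosSemidef) (h : A.trace = 0) :
    A = 0 := by
  have hdiag : ∀ i, A i i = 0 := by
    intro i
    have := (Finset.sum_eq_zero_iff_of_nonneg (fun i _ => psd_diag_nonneg' hA i)).mp h
    exact this i (Finset.mem_univ i)
  ext i j
  have hcol : A *ᵥ Pi.single j 1 = 0 := by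
    rw [← hA.dotProduct_mulVec_zero_iff]
    simpa [dotProduct, Matrix.mulVec, Pi.single_apply] using hdiag j
  have := congrFun hcol i
  simpa [Matrix.mulVec, dotProduct, Pi.single_apply] using this

private lemma sqrt_monotone' {S T : Matrix k k ℝ} (hS : S.PosSemidef) (hT : T.PosSemidef)
    (h : (S ^ 2 - T ^ 2).PosSemidef) : (S - T).PosSemidef := by
  have hH : (S - T).IsHermitian := hS.1.sub hT.1
  apply hH.posSemidef_iff_eigenvalues_nonneg.mpr
  intro i
  by_contra hneg
  push_neg at hneg
  set t := hH.eigenvalues i with ht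
  set v := ⇑(hH.eigenvectorBasis i) with hv
  have hvec : (S - T) *ᵥ v = t • v := hH.mulVec_eigenvectorBasis i
  have hvne : v ≠ 0 := by
    intro h0
    have := (hH.eigenvectorBasis).orthonormal.1 i
    rw [hv] at h0
    rw [show (hH.eigenvectorBasis i : EuclideanSpace ℝ k) = 0 from by
      ext j; exact congrFun h0 j] at this
    simp at this
  have hstar : star v = v := by simp
  have hsymm : (S - T)ᵀ = S - T := by
    have := hH
    rwa [Matrix.IsHermitian, conjTranspose_eq_transpose_of_trivial] at this
  have hkey : v ⬝ᵥ (S ^ 2 - T ^ 2) *ᵥ v = t * (v ⬝ᵥ S *ᵥ v + v ⬝ᵥ T *ᵥ v) := by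
    have e1 : S ^ 2 - T ^ 2 = S * (S - T) + (S - T) * T := by noncomm_ring
    rw [e1, add_mulVec, dotProduct_add]
    have e3 : v ⬝ᵥ (S * (S - T)) *ᵥ v = t * (v ⬝ᵥ S *ᵥ v) := by
      rw [← mulVec_mulVec, hvec, mulVec_smul, dotProduct_smul, smul_eq_mul]
    have e4 : v ⬝ᵥ ((S - T) * T) *ᵥ v = t * (v ⬝ᵥ T *ᵥ v) := by
      rw [← mulVec_mulVec, dotProduct_mulVec v (S - T), ← hsymm, vecMul_transpose,
        hvec, smul_dotProduct, smul_eq_mul]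
    rw [e3, e4, mul_add]
  have hSv : 0 ≤ v ⬝ᵥ S *ᵥ v := by have := hS.dotProduct_mulVec_nonneg v; rwa [hstar] at this
  have hTv : 0 ≤ v ⬝ᵥ T *ᵥ v := by have := hT.dotProduct_mulVec_nonneg v; rwa [hstar] at this
  have hpos : 0 ≤ v ⬝ᵥ (S ^ 2 - T ^ 2) *ᵥ v := by have := h.dotProduct_mulVec_nonneg v; rwa [hstar] at this
  rw [hkey] at hpos
  have hsum : v ⬝ᵥ S *ᵥ v + v ⬝ᵥ T *ᵥ v ≤ 0 :=
    nonpos_of_mul_nonneg_right hpos hneg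
  have hS0 : v ⬝ᵥ S *ᵥ v = 0 := le_antisymm (by linarith) hSv
  have hT0 : v ⬝ᵥ T *ᵥ v = 0 := le_antisymm (by linarith) hTv
  have hSv0 : S *ᵥ v = 0 := by
    rw [← hS.dotProduct_mulVec_zero_iff, hstar]; exact hS0
  have hTv0 : T *ᵥ v = 0 := by
    rw [← hT.dotProduct_mulVec_zero_iff, hstar]; exact hT0
  have : t • v = 0 := by rw [← hvec, sub_mulVec, hSv0, hTv0, sub_zero]
  rcases smul_eq_zero.mp this with h1 | h2
  · exact absurd h1 (ne_of_lt hneg)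
  · exact hvne h2

private lemma trace_sqrt_mono' {A B : Matrix k k ℝ} (hA : A.PosSemidef) (hB : B.PosSemidef)
    (h : (A - B).PosSemidef) :
    hB.sqrt.trace ≤ hA.sqrt.trace ∧ (hA.sqrt.trace ≤ hB.sqrt.trace → A = B) := by
  have h2 : (hA.sqrt ^ 2 - hB.sqrt ^ 2).PosSemidef := by
    rw [hA.sq_sqrt, hB.sq_sqrt]; exact h
  have hmono := sqrt_monotone' hA.posSemidef_sqrt hB.posSemidef_sqrt h2
  have htr : 0 ≤ (hA.sqrt - hB.sqrt).trace := by
    rw [Matrix.trace]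
    exact Finset.sum_nonneg fun i _ => psd_diag_nonneg' hmono i
  rw [Matrix.trace_sub] at htr
  refine ⟨by linarith, fun hle => ?_⟩
  have h0 : (hA.sqrt - hB.sqrt).trace = 0 := by rw [Matrix.trace_sub]; linarith
  have hST : hA.sqrt = hB.sqrt := by
    have := psd_trace_zero' hmono h0
    rwa [sub_eq_zero] at this
  rw [← hA.sq_sqrt, ← hB.sq_sqrt, hST]

end Aux

section Proj

variable {a b : Type*} [Fintype a] [Fintype b] [DecidableEq a] [DecidableEq b]

/-- Orthogonal projection onto the row space of `X`, as a matrix. -/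
noncomputable def projMat (X : Matrix a b ℝ) : Matrix b b ℝ :=
  Matrix.toEuclideanLin.symm
    ((LinearMap.range (Matrix.toEuclideanLin Xᵀ)).subtype ∘ₗ
      (Submodule.orthogonalProjectionOnto (LinearMap.range (Matrix.toEuclideanLin Xᵀ))).toLinearMap)

lemma projMat_mulVec (X : Matrix a b ℝ) (v : EuclideanSpace ℝ b) :
    projMat X *ᵥ v =
      (Submodule.orthogonalProjectionOnto (LinearMap.range (Matrix.toEuclideanLin Xᵀ)) v :
        EuclideanSpace ℝ b) := by
  have := Matrix.ofLp_toEuclideanLin_apply (Matrix.toEuclideanLin.symm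
    ((LinearMap.range (Matrix.toEuclideanLin Xᵀ)).subtype ∘ₗ
      (Submodule.orthogonalProjectionOnto (LinearMap.range (Matrix.toEuclideanLin Xᵀ))).toLinearMap)) v
  rw [LinearEquiv.apply_symm_apply] at this
  exact this.symm

lemma ext_of_mulVec {c : Type*} [Fintype c] [DecidableEq c] {A B : Matrix b c ℝ}
    (h : ∀ v, A *ᵥ v = B *ᵥ v) : A = B := by
  apply Matrix.toLin'.injective
  ext v i
  have := congrFun (h (Pi.single v 1)) i
  simpa [Matrix.toLin'_apply] using this

lemma projMat_fix (X : Matrix a b ℝ) {v : EuclideanSpace ℝ b}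
    (hv : v ∈ LinearMap.range (Matrix.toEuclideanLin Xᵀ)) : projMat X *ᵥ v = v := by
  rw [projMat_mulVec, ← Submodule.starProjection_apply, Submodule.starProjection_eq_self_iff.mpr hv]

lemma projMat_idem (X : Matrix a b ℝ) : projMat X * projMat X = projMat X := by
  apply ext_of_mulVec
  intro v
  rw [← mulVec_mulVec, projMat_mulVec X (WithLp.toLp 2 v)]
  exact projMat_fix X (SetLike.coe_mem _)

lemma projMat_mul_transpose (X : Matrix a b ℝ) : projMat X * Xᵀ = Xᵀ := by
  apply ext_of_mulVec
  intro v
  rw [← mulVec_mulVec]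
  exact projMat_fix X (v := WithLp.toLp 2 (Xᵀ *ᵥ v)) ⟨WithLp.toLp 2 v, rfl⟩

lemma projMat_apply_eq (X : Matrix a b ℝ) (i j : b) :
    projMat X i j = (Submodule.orthogonalProjectionOnto (LinearMap.range (Matrix.toEuclideanLin Xᵀ))
      ((WithLp.equiv 2 (b → ℝ)).symm (Pi.single j 1)) : EuclideanSpace ℝ b) i := by
  have := congrFun (projMat_mulVec X ((WithLp.equiv 2 (b → ℝ)).symm (Pi.single j 1))) i
  rw [← this]
  show projMat X i j = (projMat X *ᵥ Pi.single j 1) i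
  simp [Matrix.mulVec_single]

lemma projMat_symm (X : Matrix a b ℝ) : (projMat X)ᵀ = projMat X := by
  ext i j
  rw [Matrix.transpose_apply, projMat_apply_eq, projMat_apply_eq]
  have h := Submodule.inner_starProjection_left_eq_right
    (𝕜 := ℝ) (LinearMap.range (Matrix.toEuclideanLin Xᵀ))
    ((WithLp.equiv 2 (b → ℝ)).symm (Pi.single j 1))
    ((WithLp.equiv 2 (b → ℝ)).symm (Pi.single i 1))
  simp only [PiLp.inner_apply, RCLike.inner_apply, conj_trivial] at h
  simpa [Pi.single_apply, Finset.sum_ite_eq, Finset.sum_ite_eq', mul_comm] using h.symm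

lemma mul_projMat_self (X : Matrix a b ℝ) : X * projMat X = X := by
  have h : (X * projMat X)ᵀ = Xᵀ := by
    rw [Matrix.transpose_mul, projMat_symm, projMat_mul_transpose]
  exact Matrix.transpose_inj.mp h

lemma projMat_mul_of_feasible (X : Matrix a b ℝ) {Z : Matrix b b ℝ} (hZ : X = X * Z) :
    projMat X * Z = projMat X := by
  apply ext_of_mulVec
  intro v
  rw [← mulVec_mulVec, projMat_mulVec X (WithLp.toLp 2 (Z *ᵥ v)), projMat_mulVec X (WithLp.toLp 2 v)]
  have hker : X *ᵥ (Z *ᵥ v - v) = 0 := by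
    rw [Matrix.mulVec_sub, Matrix.mulVec_mulVec, ← hZ, sub_self]
  have hmem : (WithLp.equiv 2 (b → ℝ)).symm (Z *ᵥ v - v) ∈
      (LinearMap.range (Matrix.toEuclideanLin Xᵀ))ᗮ := by
    rw [Submodule.mem_orthogonal]
    rintro u ⟨w, rfl⟩
    show (inner ℝ (Matrix.toEuclideanLin Xᵀ w)
      ((WithLp.equiv 2 (b → ℝ)).symm (Z *ᵥ v - v)) : ℝ) = 0
    rw [PiLp.inner_apply]
    simp only [RCLike.inner_apply, conj_trivial]
    show (Z *ᵥ v - v) ⬝ᵥ (Xᵀ *ᵥ (WithLp.equiv 2 (a → ℝ)) w) = 0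
    rw [dotProduct_comm, Matrix.mulVec_transpose, ← Matrix.dotProduct_mulVec, hker, dotProduct_zero]
  have h0 : Submodule.orthogonalProjectionOnto (LinearMap.range (Matrix.toEuclideanLin Xᵀ))
      ((WithLp.equiv 2 (b → ℝ)).symm (Z *ᵥ v - v)) = 0 :=
    Submodule.orthogonalProjectionOnto_apply_of_mem_orthogonal hmem
  have hsplit : (WithLp.equiv 2 (b → ℝ)).symm (Z *ᵥ v) =
      (WithLp.equiv 2 (b → ℝ)).symm v + (WithLp.equiv 2 (b → ℝ)).symm (Z *ᵥ v - v) := by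
    ext i; simp
  have h1 : Submodule.orthogonalProjectionOnto (LinearMap.range (Matrix.toEuclideanLin Xᵀ))
        ((WithLp.equiv 2 (b → ℝ)).symm (Z *ᵥ v)) =
      Submodule.orthogonalProjectionOnto (LinearMap.range (Matrix.toEuclideanLin Xᵀ))
        ((WithLp.equiv 2 (b → ℝ)).symm v) := by
    rw [hsplit, map_add, h0, add_zero]
  exact congrArg (fun x => WithLp.ofLp x.1) h1

end Proj

/-- The nuclear norm of a real matrix: the sum of its singular values
(the square roots of the eigenvalues of `Aᵀ * A`). -/
noncomputable def nuclearNorm {m n : Type*} [Fintype m] [Fintype n] [DecidableEq n]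
    (A : Matrix m n ℝ) : ℝ :=
  ∑ i, Real.sqrt ((Matrix.isHermitian_conjTranspose_mul_self A).eigenvalues i)

lemma nuclearNorm_eq_trace_sqrt {m n : Type*} [Fintype m] [Fintype n] [DecidableEq n]
    (A : Matrix m n ℝ) :
    nuclearNorm A = (Matrix.posSemidef_conjTranspose_mul_self A).sqrt.trace := by
  rw [trace_sqrt']
  rfl

/-- If `Z₁` and `Z₂` both minimize the nuclear norm over all `Z` with `X = X * Z`,
then `Z₁ = Z₂`. -/
theorem nuclearNorm_minimizer_unique {m n : ℕ} (X : Matrix (Fin m) (Fin n) ℝ)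
    (Z₁ Z₂ : Matrix (Fin n) (Fin n) ℝ)
    (h₁ : X = X * Z₁) (h₂ : X = X * Z₂)
    (hmin₁ : ∀ W : Matrix (Fin n) (Fin n) ℝ, X = X * W → nuclearNorm Z₁ ≤ nuclearNorm W)
    (hmin₂ : ∀ W : Matrix (Fin n) (Fin n) ℝ, X = X * W → nuclearNorm Z₂ ≤ nuclearNorm W) :
    Z₁ = Z₂ := by
  set P := projMat X with hP
  have hfeasP : X = X * P := (mul_projMat_self X).symm
  have key : ∀ Z : Matrix (Fin n) (Fin n) ℝ, X = X * Z → nuclearNorm Z ≤ nuclearNorm P →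
      Z = P := by
    intro Z hZ hle
    set N := Z - P with hNdef
    have hPZ : P * Z = P := projMat_mul_of_feasible X hZ
    have hPP : P * P = P := projMat_idem X
    have hPN : P * N = 0 := by rw [hNdef, mul_sub, hPZ, hPP, sub_self]
    have hPt : Pᴴ = P := by
      rw [conjTranspose_eq_transpose_of_trivial]; exact projMat_symm X
    have hPcN : Pᴴ * N = 0 := by rw [hPt]; exact hPN
    have hNP : Nᴴ * P = 0 := by
      have h' : (Pᴴ * N)ᴴ = 0 := by rw [hPcN, conjTranspose_zero]
      rwa [conjTranspose_mul, conjTranspose_conjTranspose] at h'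
    have hdecomp : Zᴴ * Z = Pᴴ * P + Nᴴ * N := by
      have hZPN : Z = P + N := by rw [hNdef]; abel
      rw [hZPN, conjTranspose_add, add_mul, mul_add, mul_add, hPcN, hNP]
      abel
    have hApsd := Matrix.posSemidef_conjTranspose_mul_self Z
    have hBpsd := Matrix.posSemidef_conjTranspose_mul_self P
    have hMpsd : (Zᴴ * Z - Pᴴ * P).PosSemidef := by
      rw [hdecomp, add_sub_cancel_left]
      exact Matrix.posSemidef_conjTranspose_mul_self N
    obtain ⟨-, heq⟩ := trace_sqrt_mono' hApsd hBpsd hMpsd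
    have hZZ : Zᴴ * Z = Pᴴ * P := by
      apply heq
      rw [← nuclearNorm_eq_trace_sqrt, ← nuclearNorm_eq_trace_sqrt]
      exact hle
    have hNN : Nᴴ * N = 0 := by
      have := hdecomp.symm.trans hZZ
      rwa [add_eq_left] at this
    have hN0 : N = 0 := Matrix.conjTranspose_mul_self_eq_zero.mp hNN
    rw [hNdef, sub_eq_zero] at hN0
    exact hN0
  have e₁ : Z₁ = P := key Z₁ h₁ (hmin₁ P hfeasP)
  have e₂ : Z₂ = P := key Z₂ h₂ (hmin₂ P hfeasP)
  rw [e₁, e₂]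
end

section
/- Let W be a real matrix written in block form W = [[A, B], [C, D]], where A and D are (possibly non-square) diagonal blocks of a 2×2 block partition of the rows and columns of W. Then ‖W‖_* ≥ ‖A‖_* + ‖D‖_*; in particular, ‖A‖_* ≤ ‖W‖_* − ‖D‖_*. -/
open Matrix

namespace NuclearAux
set_option linter.unusedSectionVars false
variable {m n : Type*} [Fintype m] [Fintype n] [DecidableEq n]
lemma dot_self_mulVec (M : Matrix m n ℝ) (x : n → ℝ) :
    (M *ᵥ x) ⬝ᵥ (M *ᵥ x) = x ⬝ᵥ ((Mᵀ * M) *ᵥ x) := by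
  conv_rhs => rw [← mulVec_mulVec, dotProduct_mulVec, vecMul_transpose]
lemma entry_eq_dot {m' : Type*} [Fintype m'] (Y Z : Matrix m' n ℝ) (j : n) :
    (Yᵀ * Z) j j = (fun k => Y k j) ⬝ᵥ (fun k => Z k j) := by
  simp [mul_apply, dotProduct]
lemma col_mul (M : Matrix m n ℝ) (U : Matrix n n ℝ) (j : n) :
    (fun k => (M * U) k j) = M *ᵥ (fun l => U l j) := by
  ext k; simp [mul_apply, mulVec, dotProduct]
noncomputable def evU (M : Matrix m n ℝ) : Matrix n n ℝ :=
  (Matrix.isHermitian_conjTranspose_mul_self M).eigenvectorUnitary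
lemma evU_tmul (M : Matrix m n ℝ) : (evU M)ᵀ * evU M = 1 := by
  have := (Matrix.mem_unitaryGroup_iff').mp
    ((Matrix.isHermitian_conjTranspose_mul_self M).eigenvectorUnitary).2
  simpa [evU, star_eq_conjTranspose, conjTranspose_eq_transpose_of_trivial] using this
lemma evU_mult (M : Matrix m n ℝ) : evU M * (evU M)ᵀ = 1 := by
  have := (Matrix.mem_unitaryGroup_iff).mp
    ((Matrix.isHermitian_conjTranspose_mul_self M).eigenvectorUnitary).2
  simpa [evU, star_eq_conjTranspose, conjTranspose_eq_transpose_of_trivial] using this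
lemma evU_spec (M : Matrix m n ℝ) :
    (evU M)ᵀ * (Mᵀ * M) * evU M =
      diagonal ((Matrix.isHermitian_conjTranspose_mul_self M).eigenvalues) := by
  have := (Matrix.isHermitian_conjTranspose_mul_self M).conjStarAlgAut_star_eigenvectorUnitary
  simpa [evU, star_eq_conjTranspose, conjTranspose_eq_transpose_of_trivial,
    RCLike.ofReal_real_eq_id, Function.comp, Unitary.conjStarAlgAut_star_apply] using this

lemma dot_sq {ι : Type*} [Fintype ι] (x : ι → ℝ) : ∑ i, x i ^ 2 = x ⬝ᵥ x := by
  simp [dotProduct, sq]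

lemma trace_le (M Q : Matrix m n ℝ)
    (hQ : ∀ x : n → ℝ, (Q *ᵥ x) ⬝ᵥ (Q *ᵥ x) ≤ x ⬝ᵥ x) :
    trace (Mᵀ * Q) ≤ nuclearNorm M := by
  set μ := (Matrix.isHermitian_conjTranspose_mul_self M).eigenvalues with hμdef
  set U := evU M with hUdef
  have e1 : (M * U)ᵀ * (Q * U) = Uᵀ * (Mᵀ * Q) * U := by
    simp [transpose_mul, Matrix.mul_assoc]
  have e2 : trace ((M * U)ᵀ * (Q * U)) = trace (Mᵀ * Q) := by
    rw [e1, trace_mul_cycle, ← Matrix.mul_assoc, evU_mult, Matrix.one_mul]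
  have e3 : trace (Mᵀ * Q) = ∑ j, ((M * U)ᵀ * (Q * U)) j j := by
    rw [← e2]; rfl
  rw [e3, nuclearNorm]
  apply Finset.sum_le_sum
  intro j _
  rw [entry_eq_dot, col_mul, col_mul]
  set u : n → ℝ := fun l => U l j with hu
  set a : m → ℝ := M *ᵥ u
  set b : m → ℝ := Q *ᵥ u
  have ha : a ⬝ᵥ a = μ j := by
    have h4 : ((M * U)ᵀ * (M * U)) j j = a ⬝ᵥ a := by
      rw [entry_eq_dot, col_mul]
    have h5 : (M * U)ᵀ * (M * U) = Uᵀ * (Mᵀ * M) * U := by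
      simp [transpose_mul, Matrix.mul_assoc]
    rw [← h4, h5, evU_spec, diagonal_apply_eq]
  have hb : b ⬝ᵥ b ≤ 1 := by
    have huu : u ⬝ᵥ u = 1 := by
      have : u ⬝ᵥ u = (Uᵀ * U) j j := by
        rw [entry_eq_dot]
      rw [this, evU_tmul, one_apply_eq]
    calc b ⬝ᵥ b ≤ u ⬝ᵥ u := hQ u
      _ = 1 := huu
  calc a ⬝ᵥ b = ∑ k, a k * b k := rfl
    _ ≤ Real.sqrt (∑ k, a k ^ 2) * Real.sqrt (∑ k, b k ^ 2) :=
        Real.sum_mul_le_sqrt_mul_sqrt _ _ _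
    _ = Real.sqrt (a ⬝ᵥ a) * Real.sqrt (b ⬝ᵥ b) := by rw [dot_sq, dot_sq]
    _ ≤ Real.sqrt (μ j) * 1 := by
        rw [ha]
        exact mul_le_mul_of_nonneg_left (Real.sqrt_le_one.mpr hb) (Real.sqrt_nonneg _)
    _ = Real.sqrt (μ j) := mul_one _


noncomputable def gfun (M : Matrix m n ℝ) : n → ℝ :=
  fun i => if (Matrix.isHermitian_conjTranspose_mul_self M).eigenvalues i = 0 then 0
    else (Real.sqrt ((Matrix.isHermitian_conjTranspose_mul_self M).eigenvalues i))⁻¹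

noncomputable def optQ (M : Matrix m n ℝ) : Matrix m n ℝ :=
  M * (evU M * diagonal (gfun M) * (evU M)ᵀ)

lemma spec' (M : Matrix m n ℝ) :
    Mᵀ * M = evU M * diagonal ((Matrix.isHermitian_conjTranspose_mul_self M).eigenvalues)
      * (evU M)ᵀ := by
  rw [← evU_spec M]
  simp only [Matrix.mul_assoc]
  rw [evU_mult, Matrix.mul_one, ← Matrix.mul_assoc, evU_mult, Matrix.one_mul]

lemma optQ_trace (M : Matrix m n ℝ) : trace (Mᵀ * optQ M) = nuclearNorm M := by
  set μ := (Matrix.isHermitian_conjTranspose_mul_self M).eigenvalues with hμdef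
  set U := evU M with hUdef
  set g := gfun M with hgdef
  have hU1 : Uᵀ * U = 1 := evU_tmul M
  have h1 : Mᵀ * optQ M = U * (diagonal μ * diagonal g) * Uᵀ := by
    rw [optQ, ← Matrix.mul_assoc, spec' M]
    simp only [Matrix.mul_assoc, ← hUdef, ← hμdef, ← hgdef]
    rw [← Matrix.mul_assoc Uᵀ U, hU1, Matrix.one_mul]
  have h2 : trace (Mᵀ * optQ M) = ∑ i, μ i * g i := by
    rw [h1, trace_mul_cycle, ← Matrix.mul_assoc, hU1, Matrix.one_mul,
      diagonal_mul_diagonal, trace_diagonal]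
  rw [h2, nuclearNorm]
  refine Finset.sum_congr rfl fun i _ => ?_
  by_cases h : μ i = 0
  · simp only [hgdef, gfun]
    rw [if_pos h, mul_zero]
    exact (show Real.sqrt (μ i) = 0 by rw [h, Real.sqrt_zero]).symm
  · rw [hgdef]
    simp only [gfun, ← hμdef, h, if_false]
    rw [← div_eq_mul_inv, Real.div_sqrt]

lemma optQ_bound (M : Matrix m n ℝ) (x : n → ℝ) :
    (optQ M *ᵥ x) ⬝ᵥ (optQ M *ᵥ x) ≤ x ⬝ᵥ x := by
  set μ := (Matrix.isHermitian_conjTranspose_mul_self M).eigenvalues with hμdef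
  set U := evU M with hUdef
  set g := gfun M with hgdef
  set h : n → ℝ := fun i => g i * (μ i * g i) with hhdef
  have hU1 : Uᵀ * U = 1 := evU_tmul M
  have hU2 : U * Uᵀ = 1 := evU_mult M
  have hh0 : ∀ i, 0 ≤ h i ∧ h i ≤ 1 := by
    intro i
    by_cases hz : μ i = 0
    · simp [hhdef, hgdef, gfun, ← hμdef, hz]
    · have hpos : 0 < μ i :=
        lt_of_le_of_ne (M.eigenvalues_conjTranspose_mul_self_nonneg i) (Ne.symm hz)
      have hs : Real.sqrt (μ i) ≠ 0 := (Real.sqrt_pos.mpr hpos).ne'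
      have : h i = 1 := by
        rw [hhdef]
        simp only [hgdef, gfun, ← hμdef, hz, if_false]
        rw [← div_eq_mul_inv (μ i), Real.div_sqrt, inv_mul_cancel₀ hs]
      rw [this]; exact ⟨zero_le_one, le_refl 1⟩
  have hQQ : (optQ M)ᵀ * optQ M = U * diagonal h * Uᵀ := by
    rw [optQ, ← hUdef, ← hgdef]
    rw [transpose_mul]
    have hPt : (U * diagonal g * Uᵀ)ᵀ = U * diagonal g * Uᵀ := by
      simp [transpose_mul, Matrix.mul_assoc, diagonal_transpose]
    rw [hPt]
    calc U * diagonal g * Uᵀ * Mᵀ * (M * (U * diagonal g * Uᵀ))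
        = U * diagonal g * Uᵀ * ((Mᵀ * M) * (U * diagonal g * Uᵀ)) := by
          simp only [Matrix.mul_assoc]
      _ = U * diagonal g * Uᵀ * (U * diagonal μ * Uᵀ * (U * diagonal g * Uᵀ)) := by
          rw [spec' M, ← hUdef, ← hμdef]
      _ = U * diagonal h * Uᵀ := by
          simp only [Matrix.mul_assoc]
          rw [← Matrix.mul_assoc Uᵀ U, hU1, Matrix.one_mul,
            ← Matrix.mul_assoc Uᵀ U, hU1, Matrix.one_mul]
          rw [← Matrix.mul_assoc (diagonal μ) (diagonal g), diagonal_mul_diagonal]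
          rw [← Matrix.mul_assoc (diagonal g) (diagonal _), diagonal_mul_diagonal]
  rw [dot_self_mulVec, hQQ]
  set y : n → ℝ := Uᵀ *ᵥ x with hydef
  have e1 : x ⬝ᵥ ((U * diagonal h * Uᵀ) *ᵥ x) = y ⬝ᵥ (diagonal h *ᵥ y) := by
    rw [Matrix.mul_assoc, ← mulVec_mulVec, dotProduct_mulVec, ← mulVec_transpose, ← mulVec_mulVec]
  have e2 : y ⬝ᵥ (diagonal h *ᵥ y) ≤ y ⬝ᵥ y := by
    simp only [dotProduct, mulVec_diagonal]
    refine Finset.sum_le_sum fun i _ => ?_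
    have := hh0 i
    nlinarith [sq_nonneg (y i)]
  have e3 : y ⬝ᵥ y = x ⬝ᵥ x := by
    rw [hydef, dot_self_mulVec, transpose_transpose, hU2, Matrix.one_mulVec]
  rw [e1]
  rw [e3] at e2
  exact e2

end NuclearAux

open NuclearAux

/-- For a matrix `W = [[A, B], [C, D]]` in `2 × 2` block form, the nuclear norm of `W`
is at least `‖A‖₊ + ‖D‖₊`; in particular `‖A‖₊ ≤ ‖W‖₊ − ‖D‖₊`. -/
theorem nuclearNorm_fromBlocks_ge {m₁ m₂ n₁ n₂ : ℕ}
    (A : Matrix (Fin m₁) (Fin n₁) ℝ) (B : Matrix (Fin m₁) (Fin n₂) ℝ)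
    (C : Matrix (Fin m₂) (Fin n₁) ℝ) (D : Matrix (Fin m₂) (Fin n₂) ℝ) :
    nuclearNorm A + nuclearNorm D ≤ nuclearNorm (Matrix.fromBlocks A B C D) ∧
    nuclearNorm A ≤ nuclearNorm (Matrix.fromBlocks A B C D) - nuclearNorm D := by
  have main : nuclearNorm A + nuclearNorm D ≤ nuclearNorm (Matrix.fromBlocks A B C D) := by
    set QW : Matrix (Fin m₁ ⊕ Fin m₂) (Fin n₁ ⊕ Fin n₂) ℝ :=
      Matrix.fromBlocks (optQ A) 0 0 (optQ D) with hQW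
    have hpair : trace ((Matrix.fromBlocks A B C D)ᵀ * QW)
        = nuclearNorm A + nuclearNorm D := by
      rw [← optQ_trace A, ← optQ_trace D, hQW, fromBlocks_transpose, fromBlocks_multiply]
      simp [Matrix.trace, Fintype.sum_sum_type, Matrix.diag]
    have hbound : ∀ x : (Fin n₁ ⊕ Fin n₂) → ℝ, (QW *ᵥ x) ⬝ᵥ (QW *ᵥ x) ≤ x ⬝ᵥ x := by
      intro x
      rw [hQW, fromBlocks_mulVec]
      simp only [Matrix.zero_mulVec, add_zero, zero_add]
      rw [sumElim_dotProduct_sumElim]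
      have h1 := optQ_bound A (x ∘ Sum.inl)
      have h2 := optQ_bound D (x ∘ Sum.inr)
      have hx : (x ∘ Sum.inl) ⬝ᵥ (x ∘ Sum.inl) + (x ∘ Sum.inr) ⬝ᵥ (x ∘ Sum.inr)
          = x ⬝ᵥ x := by
        simp [dotProduct, Fintype.sum_sum_type, Function.comp]
      linarith
    calc nuclearNorm A + nuclearNorm D = trace ((Matrix.fromBlocks A B C D)ᵀ * QW) :=
        hpair.symm
      _ ≤ nuclearNorm (Matrix.fromBlocks A B C D) := trace_le _ QW hbound
  exact ⟨main, le_sub_iff_add_le.mpr main⟩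
end
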